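/- Gap-normalization (Lemma 1): there exists an optimal cover C* of P such that for every gap G (maximal connected component of ∂R \ P) and every C_j* ∈ C*, either G ⊆ C_j* or G ∩ C_j* = ∅. -/

import Mathlib

/-- A closed arc on the circle of circumference `T`. -/
def carc (T : ℝ) (a b : ℝ) : Set (AddCircle T) :=
  (fun x : ℝ => (x : AddCircle T)) '' Set.Icc a b

/-- An open arc on the circle of circumference `T`. -/
def oarc (T : ℝ) (a b : ℝ) : Set (AddCircle T) :=
  (fun x : ℝ => (x : AddCircle T)) '' Set.Ioo a b

open Set

namespace GapNorm


lemma coe_int_mul (p : ℝ) (k : ℤ) (x : ℝ) :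
    ((x + k * p : ℝ) : AddCircle p) = (x : AddCircle p) := by
  have : ((k * p : ℝ) : AddCircle p) = 0 := by
    rw [AddCircle.coe_eq_zero_iff]
    exact ⟨k, by push_cast [zsmul_eq_mul]; ring⟩
  rw [AddCircle.coe_add, this, add_zero]

lemma coe_sub_int_mul (p : ℝ) (k : ℤ) (x : ℝ) :
    ((x - k * p : ℝ) : AddCircle p) = (x : AddCircle p) := by
  have h := coe_int_mul p k (x - k * p)
  rw [sub_add_cancel] at h
  exact h.symm ▸ rfl

lemma coe_eq_coe {p : ℝ} {x y : ℝ} (h : (x : AddCircle p) = (y : AddCircle p)) :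
    ∃ k : ℤ, y = x + k * p := by
  have h2 := QuotientAddGroup.eq.mp h
  rw [AddSubgroup.mem_zmultiples_iff] at h2
  obtain ⟨k, hk⟩ := h2
  exact ⟨k, by rw [zsmul_eq_mul] at hk; linarith⟩

lemma carc_shift (p a b : ℝ) (k : ℤ) : carc p (a + k * p) (b + k * p) = carc p a b := by
  ext x
  constructor
  · rintro ⟨s, hs, rfl⟩
    exact ⟨s - k * p, ⟨by linarith [hs.1], by linarith [hs.2]⟩, coe_sub_int_mul p k s⟩
  · rintro ⟨s, hs, rfl⟩
    exact ⟨s + k * p, ⟨by linarith [hs.1], by linarith [hs.2]⟩, coe_int_mul p k s⟩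

lemma oarc_shift (p a b : ℝ) (k : ℤ) : oarc p (a + k * p) (b + k * p) = oarc p a b := by
  ext x
  constructor
  · rintro ⟨s, hs, rfl⟩
    exact ⟨s - k * p, ⟨by linarith [hs.1], by linarith [hs.2]⟩, coe_sub_int_mul p k s⟩
  · rintro ⟨s, hs, rfl⟩
    exact ⟨s + k * p, ⟨by linarith [hs.1], by linarith [hs.2]⟩, coe_int_mul p k s⟩

lemma carc_univ (p a : ℝ) (hp : 0 < p) : carc p a (a + p) = univ := by
  haveI : Fact (0 < p) := ⟨hp⟩
  exact AddCircle.coe_image_Icc_eq p a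

/-- Gap dichotomy: if no integer translate of either endpoint of `[α, β]` lies in the
open interval `(g₁, g₂)`, then the open arc is contained in or disjoint from the closed arc. -/
lemma gap_dichotomy {p g₁ g₂ α β : ℝ}
    (Hα : ∀ k : ℤ, α + k * p ∉ Ioo g₁ g₂)
    (Hβ : ∀ k : ℤ, β + k * p ∉ Ioo g₁ g₂) :
    oarc p g₁ g₂ ⊆ carc p α β ∨ Disjoint (oarc p g₁ g₂) (carc p α β) := by
  rcases em (Disjoint (oarc p g₁ g₂) (carc p α β)) with hd | hd
  · exact Or.inr hd
  left
  obtain ⟨x, hx1, hx2⟩ := Set.not_disjoint_iff.mp hd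
  obtain ⟨t, ht, hxt⟩ := hx1
  obtain ⟨s, hs, hxs⟩ := hx2
  obtain ⟨k, hk⟩ := coe_eq_coe (p := p) (hxt.trans hxs.symm)
  have h1 : α ≤ g₁ + k * p := by
    by_contra hc
    push_neg at hc
    exact Hα (-k) ⟨by push_cast; linarith [ht.1, hs.1], by push_cast; linarith [ht.2, hs.1]⟩
  have h2 : g₂ + k * p ≤ β := by
    by_contra hc
    push_neg at hc
    exact Hβ (-k) ⟨by push_cast; linarith [ht.1, hs.2], by push_cast; linarith [ht.2, hs.2]⟩
  rw [← oarc_shift p g₁ g₂ k]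
  exact Set.image_mono (fun y hy => ⟨by linarith [hy.1], by linarith [hy.2]⟩)

section Circle

variable {Q : ℕ} (hQ : 0 < Q) {u v : Fin Q → ℝ} {p : ℝ}
variable (hp : 0 < p)
variable (huv : ∀ k, u k ≤ v k)
variable (hsep : ∀ k : Fin Q, ∀ h : k.1 + 1 < Q, v k ≤ u ⟨k.1 + 1, h⟩)
variable (h0 : 0 ≤ u ⟨0, hQ⟩)
variable (hTi : v ⟨Q - 1, Nat.sub_lt hQ one_pos⟩ ≤ p)

include huv hsep in
lemma chain_vu : ∀ (b : ℕ) (hb : b < Q) (l : Fin Q), l.1 < b → v l ≤ u ⟨b, hb⟩ := by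
  intro b
  induction b with
  | zero => intro _ _ h; omega
  | succ b ih =>
    intro hb l h
    have hbq : b < Q := Nat.lt_of_succ_lt hb
    rcases Nat.lt_or_ge l.1 b with h' | h'
    · exact le_trans (ih hbq l h') (le_trans (huv ⟨b, hbq⟩) (hsep ⟨b, hbq⟩ hb))
    · have hl : l = ⟨b, hbq⟩ := Fin.ext (show l.1 = b by omega)
      rw [hl]; exact hsep ⟨b, hbq⟩ hb

include huv hsep in
lemma chain_vu' (l l' : Fin Q) (h : l.1 < l'.1) : v l ≤ u l' := by
  have := chain_vu huv hsep l'.1 l'.2 l h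
  simpa using this

include huv hsep in
lemma umono (l l' : Fin Q) (h : l.1 ≤ l'.1) : u l ≤ u l' := by
  rcases Nat.lt_or_ge l.1 l'.1 with h' | h'
  · exact le_trans (huv l) (chain_vu' huv hsep l l' h')
  · have : l = l' := Fin.ext (by omega)
    rw [this]

include huv hsep in
lemma vmono (l l' : Fin Q) (h : l.1 ≤ l'.1) : v l ≤ v l' := by
  rcases Nat.lt_or_ge l.1 l'.1 with h' | h'
  · exact le_trans (chain_vu' huv hsep l l' h') (huv l')
  · have : l = l' := Fin.ext (by omega)
    rw [this]

include hQ huv hsep h0 hTi in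
lemma comp_bounds (l : Fin Q) : 0 ≤ u l ∧ v l ≤ p := by
  constructor
  · exact le_trans h0 (umono huv hsep _ l (Nat.zero_le _))
  · exact le_trans (vmono huv hsep l ⟨Q - 1, Nat.sub_lt hQ one_pos⟩ (show l.1 ≤ Q - 1 by have := l.2; omega)) hTi

include hQ hp huv hsep h0 hTi in
/-- No integer translate of a point of a perimeter component lies in a gap. -/
lemma not_in_gap (K l : Fin Q) (t' : ℝ) (ht : t' ∈ Icc (u l) (v l)) (k : ℤ) :
    t' + k * p ∉ Ioo (v K)
      (if h : K.1 + 1 < Q then u ⟨K.1 + 1, h⟩ else u ⟨0, hQ⟩ + p) := by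
  have hul := (comp_bounds hQ huv hsep h0 hTi l).1
  have hvl := (comp_bounds hQ huv hsep h0 hTi l).2
  have hvK0 : 0 ≤ v K := le_trans (comp_bounds hQ huv hsep h0 hTi K).1 (huv K)
  intro hmem
  by_cases h : K.1 + 1 < Q
  · rw [dif_pos h] at hmem
    obtain ⟨h1, h2⟩ := hmem
    have huK1 : u ⟨K.1 + 1, h⟩ ≤ p := le_trans (huv _) (comp_bounds hQ huv hsep h0 hTi _).2
    have hk0 : k = 0 := by
      have l1 : (-1 : ℝ) * p < (k : ℝ) * p := by linarith [ht.1, ht.2]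
      have l2 : (k : ℝ) * p < 1 * p := by linarith [ht.1, ht.2]
      have c1 : (-1 : ℝ) < (k : ℝ) := lt_of_mul_lt_mul_right (by linarith) hp.le
      have c2 : (k : ℝ) < 1 := lt_of_mul_lt_mul_right (by linarith) hp.le
      have : (-1 : ℤ) < k ∧ k < 1 := ⟨by exact_mod_cast c1, by exact_mod_cast c2⟩
      omega
    subst hk0
    push_cast at h1 h2
    rcases le_or_gt l.1 K.1 with hlK | hlK
    · have := vmono huv hsep l K hlK
      linarith [ht.2]
    · have := umono huv hsep ⟨K.1 + 1, h⟩ l (show K.1 + 1 ≤ l.1 by omega)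
      linarith [ht.1]
  · rw [dif_neg h] at hmem
    obtain ⟨h1, h2⟩ := hmem
    have hK1 : K.1 = Q - 1 := by have := K.2; omega
    have hvlK : v l ≤ v K := vmono huv hsep l K (show l.1 ≤ K.1 by have := l.2; omega)
    have hu0l : u ⟨0, hQ⟩ ≤ u l := umono huv hsep _ l (Nat.zero_le _)
    have hu0p : u ⟨0, hQ⟩ ≤ p :=
      le_trans (huv _) (comp_bounds hQ huv hsep h0 hTi _).2
    have hk01 : k = 0 ∨ k = 1 := by
      have l1 : (-1 : ℝ) * p < (k : ℝ) * p := by linarith [ht.1, ht.2]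
      have l2 : (k : ℝ) * p < 2 * p := by linarith [ht.1, ht.2]
      have c1 : (-1 : ℝ) < (k : ℝ) := lt_of_mul_lt_mul_right (by linarith) hp.le
      have c2 : (k : ℝ) < 2 := lt_of_mul_lt_mul_right (by linarith) hp.le
      have : (-1 : ℤ) < k ∧ k < 2 := ⟨by exact_mod_cast c1, by exact_mod_cast c2⟩
      omega
    rcases hk01 with rfl | rfl
    · push_cast at h1 h2
      linarith [ht.2]
    · push_cast at h1 h2
      linarith [ht.1]

end Circle


variable {m n : ℕ} (T : Fin m → ℝ) (q : Fin m → ℕ) (u v : (i : Fin m) → Fin (q i) → ℝ)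

def gnBox (r : Fin n → Fin m) : Set ((Fin n → ℝ) × (Fin n → ℝ)) :=
  {p | ∀ j, p.1 j ∈ Set.Icc 0 (T (r j)) ∧ p.2 j ∈ Set.Icc 0 (T (r j))}

def gnC (r : Fin n → Fin m) : Set ((Fin n → ℝ) × (Fin n → ℝ)) :=
  {p | ∀ (i : Fin m) (k' : Fin (q i)) (t : ℝ), t ∈ Set.Icc (u i k') (v i k') →
     ∃ j, r j = i ∧ ∃ w : Fin 4,
       p.1 j ≤ t + (((w : ℤ) - 1 : ℤ) : ℝ) * T i ∧
         t + (((w : ℤ) - 1 : ℤ) : ℝ) * T i ≤ p.1 j + p.2 j}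

def gnK (r : Fin n → Fin m) : Set ((Fin n → ℝ) × (Fin n → ℝ)) :=
  gnBox T r ∩ gnC T q u v r

lemma gnBox_isCompact (r : Fin n → Fin m) : IsCompact (gnBox T r) := by
  have : gnBox T r =
      (Set.univ.pi fun j => Set.Icc (0:ℝ) (T (r j))) ×ˢ
      (Set.univ.pi fun j => Set.Icc (0:ℝ) (T (r j))) := by
    ext p
    simp only [gnBox, Set.mem_setOf_eq, Set.mem_prod, Set.mem_pi, Set.mem_univ, true_implies]
    exact ⟨fun h => ⟨fun j => (h j).1, fun j => (h j).2⟩, fun h j => ⟨h.1 j, h.2 j⟩⟩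
  rw [this]
  exact (isCompact_univ_pi fun j => isCompact_Icc).prod
    (isCompact_univ_pi fun j => isCompact_Icc)

lemma gnC_isClosed (r : Fin n → Fin m) : IsClosed (gnC T q u v r) := by
  have : gnC T q u v r =
      ⋂ (i : Fin m), ⋂ (k' : Fin (q i)), ⋂ (t : ℝ), ⋂ (_ : t ∈ Set.Icc (u i k') (v i k')),
        ⋃ (j : Fin n), ⋃ (_ : r j = i), ⋃ (w : Fin 4),
          {p : (Fin n → ℝ) × (Fin n → ℝ) |
            p.1 j ≤ t + (((w : ℤ) - 1 : ℤ) : ℝ) * T i ∧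
              t + (((w : ℤ) - 1 : ℤ) : ℝ) * T i ≤ p.1 j + p.2 j} := by
    ext p
    simp only [gnC, Set.mem_setOf_eq, Set.mem_iInter, Set.mem_iUnion, Set.mem_setOf_eq]
    constructor
    · intro h i k' t ht
      obtain ⟨j, hrj, w, h1, h2⟩ := h i k' t ht
      exact ⟨j, hrj, w, h1, h2⟩
    · intro h i k' t ht
      obtain ⟨j, hrj, w, h1, h2⟩ := h i k' t ht
      exact ⟨j, hrj, w, h1, h2⟩
  rw [this]
  refine isClosed_iInter fun i => isClosed_iInter fun k' => isClosed_iInter fun t =>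
    isClosed_iInter fun _ => isClosed_iUnion_of_finite fun j =>
    isClosed_iUnion_of_finite fun _ => isClosed_iUnion_of_finite fun w => ?_
  have h1 : IsClosed {p : (Fin n → ℝ) × (Fin n → ℝ) |
      p.1 j ≤ t + (((w : ℤ) - 1 : ℤ) : ℝ) * T i} :=
    isClosed_le (by fun_prop) continuous_const
  have h2 : IsClosed {p : (Fin n → ℝ) × (Fin n → ℝ) |
      t + (((w : ℤ) - 1 : ℤ) : ℝ) * T i ≤ p.1 j + p.2 j} :=
    isClosed_le continuous_const (by fun_prop)
  exact h1.inter h2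

lemma gnK_isCompact (r : Fin n → Fin m) : IsCompact (gnK T q u v r) :=
  (gnBox_isCompact T r).inter_right (gnC_isClosed T q u v r)

/-- Membership in `gnC` implies the covering property. -/
lemma gnC_cover (r : Fin n → Fin m) (p : (Fin n → ℝ) × (Fin n → ℝ))
    (hp : p ∈ gnC T q u v r) (i : Fin m) :
    (⋃ k, carc (T i) (u i k) (v i k)) ⊆
      ⋃ j, ⋃ (_ : r j = i), carc (T i) (p.1 j) (p.1 j + p.2 j) := by
  intro x hx
  simp only [Set.mem_iUnion] at hx ⊢
  obtain ⟨k', t, ht, hxt⟩ := hx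
  obtain ⟨j, hrj, w, hw1, hw2⟩ := hp i k' t ht
  refine ⟨j, hrj, t + (((w : ℤ) - 1 : ℤ) : ℝ) * T i, ⟨hw1, hw2⟩, ?_⟩
  exact (coe_int_mul (T i) ((w : ℤ) - 1) t).trans hxt


variable (hT : ∀ i, 0 < T i) (hq : ∀ i, 0 < q i)
  (huv : ∀ i k, u i k ≤ v i k)
  (hsep : ∀ i, ∀ k : Fin (q i), ∀ h : k.1 + 1 < q i, v i k ≤ u i ⟨k.1 + 1, h⟩)
  (h0 : ∀ i, 0 ≤ u i ⟨0, hq i⟩)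
  (hTi : ∀ i, v i ⟨q i - 1, Nat.sub_lt (hq i) one_pos⟩ ≤ T i)

include hT hq huv hsep h0 hTi in
lemma gnCover_mem (r : Fin n → Fin m) (p : (Fin n → ℝ) × (Fin n → ℝ))
    (hbox : p ∈ gnBox T r)
    (hcov : ∀ i, (⋃ k, carc (T i) (u i k) (v i k)) ⊆
      ⋃ j, ⋃ (_ : r j = i), carc (T i) (p.1 j) (p.1 j + p.2 j)) :
    p ∈ gnC T q u v r := by
  intro i k' t ht
  have hx : ((t : ℝ) : AddCircle (T i)) ∈ ⋃ k, carc (T i) (u i k) (v i k) := by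
    exact Set.mem_iUnion.mpr ⟨k', t, ht, rfl⟩
  have := hcov i hx
  simp only [Set.mem_iUnion] at this
  obtain ⟨j, hrj, s, hs, hst⟩ := this
  obtain ⟨kk, hkk⟩ := coe_eq_coe (p := T i) hst.symm
  -- hkk : s = t + kk * T i
  have hti := hT i
  have hcb := comp_bounds (hq i) (huv i) (hsep i) (h0 i) (hTi i) k'
  have ht0 : 0 ≤ t := le_trans hcb.1 ht.1
  have ht1 : t ≤ T i := le_trans ht.2 hcb.2
  have hbj := hbox j
  rw [hrj] at hbj
  have hs0 : 0 ≤ s := le_trans hbj.1.1 hs.1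
  have hs2 : s ≤ 2 * T i := le_trans hs.2 (by linarith [hbj.1.2, hbj.2.2])
  have hkk1 : (-1 : ℤ) ≤ kk := by
    have : (-1 : ℝ) * T i ≤ (kk : ℝ) * T i := by nlinarith
    have := le_of_mul_le_mul_right this hti
    exact_mod_cast this
  have hkk2 : kk ≤ 2 := by
    have : (kk : ℝ) * T i ≤ 2 * T i := by nlinarith
    have := le_of_mul_le_mul_right this hti
    exact_mod_cast this
  refine ⟨j, hrj, ⟨(kk + 1).toNat, by omega⟩, ?_, ?_⟩
  · have hw : ((((kk + 1).toNat : ℕ) : ℤ) - 1 : ℤ) = kk := by omega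
    rw [hw]
    have : t + (kk : ℝ) * T i = s := by linarith [hkk]
    rw [this]; exact hs.1
  · have hw : ((((kk + 1).toNat : ℕ) : ℤ) - 1 : ℤ) = kk := by omega
    rw [hw]
    have : t + (kk : ℝ) * T i = s := by linarith [hkk]
    rw [this]; exact hs.2

include hT hq huv hsep h0 hTi in
lemma gnNorm (r : Fin n → Fin m) (a c : Fin n → ℝ) (hc : ∀ j, 0 ≤ c j)
    (hcov : ∀ i, (⋃ k, carc (T i) (u i k) (v i k)) ⊆
      ⋃ j, ⋃ (_ : r j = i), carc (T i) (a j) (a j + c j)) :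
    ∃ p ∈ gnK T q u v r, ∀ j, p.2 j ≤ c j := by
  classical
  set a' : Fin n → ℝ := fun j => a j + (-⌊a j / T (r j)⌋ : ℤ) * T (r j) with ha'
  set c' : Fin n → ℝ := fun j => min (c j) (T (r j)) with hc'
  have hbox : (a', c') ∈ gnBox T r := by
    intro j
    have hti := hT (r j)
    have h1 := (le_div_iff₀ hti).mp (Int.floor_le (a j / T (r j)))
    have h2 := (div_lt_iff₀ hti).mp (Int.lt_floor_add_one (a j / T (r j)))
    refine ⟨⟨?_, ?_⟩, ⟨?_, ?_⟩⟩ <;> simp only [ha', hc']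
    · push_cast; nlinarith
    · push_cast; nlinarith
    · exact le_min (hc j) hti.le
    · exact min_le_right _ _
  have harc : ∀ j, carc (T (r j)) (a j) (a j + c j) ⊆
      carc (T (r j)) (a' j) (a' j + c' j) := by
    intro j
    have hti := hT (r j)
    rcases le_or_gt (c j) (T (r j)) with hcj | hcj
    · have hc'j : c' j = c j := min_eq_left hcj
      have he : a' j + c' j = (a j + c j) + (-⌊a j / T (r j)⌋ : ℤ) * T (r j) := by
        rw [hc'j, ha']; ring
      rw [he, ha']
      rw [carc_shift (T (r j)) (a j) (a j + c j) (-⌊a j / T (r j)⌋)]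
    · have hc'j : c' j = T (r j) := min_eq_right hcj.le
      rw [hc'j, carc_univ (T (r j)) (a' j) hti]
      exact Set.subset_univ _
  have hcov' : ∀ i, (⋃ k, carc (T i) (u i k) (v i k)) ⊆
      ⋃ j, ⋃ (_ : r j = i), carc (T i) (a' j) (a' j + c' j) := by
    intro i x hx
    have := hcov i hx
    simp only [Set.mem_iUnion] at this ⊢
    obtain ⟨j, hrj, hxj⟩ := this
    refine ⟨j, hrj, ?_⟩
    have := harc j
    rw [hrj] at this
    exact this hxj
  exact ⟨(a', c'), ⟨hbox, gnCover_mem T q u v hT hq huv hsep h0 hTi r (a', c') hbox hcov'⟩,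
    fun j => min_le_left _ _⟩

end GapNorm

open GapNorm

/-- Lemma 1, gap normalization: `∂R` is a disjoint union of `m`
circles of circumferences `T i`, carrying perimeters `P i = ⋃ k, [u i k, v i k]`
with gaps in between.  There exists an optimal cover — `n` robots, robot `j`
assigned a closed arc `[a j, a j + c j]` on circle `r j`, all perimeters covered,
every arc of length at most `ℓ* = sInf {feasible ℓ}` — such that every gap is
either entirely contained in or disjoint from each covering arc on its circle. -/
theorem gap_normalized_optimal_cover_exists (m n : ℕ) (hm : 0 < m) (hmn : m ≤ n)
    (T : Fin m → ℝ) (hT : ∀ i, 0 < T i)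
    (q : Fin m → ℕ) (hq : ∀ i, 0 < q i)
    (u v : (i : Fin m) → Fin (q i) → ℝ)
    (huv : ∀ i k, u i k ≤ v i k)
    (hsep : ∀ i, ∀ k : Fin (q i), ∀ h : k.1 + 1 < q i, v i k ≤ u i ⟨k.1 + 1, h⟩)
    (h0 : ∀ i, 0 ≤ u i ⟨0, hq i⟩)
    (hTi : ∀ i, v i ⟨q i - 1, Nat.sub_lt (hq i) one_pos⟩ ≤ T i) :
    ∃ (r : Fin n → Fin m) (a c : Fin n → ℝ),
      (∀ j, 0 ≤ c j ∧ c j ≤ sInf {ℓ : ℝ | ∃ (r' : Fin n → Fin m) (a' c' : Fin n → ℝ),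
          (∀ j', 0 ≤ c' j' ∧ c' j' ≤ ℓ) ∧
          ∀ i, (⋃ k, carc (T i) (u i k) (v i k)) ⊆
            ⋃ j', ⋃ (_ : r' j' = i), carc (T i) (a' j') (a' j' + c' j')}) ∧
      (∀ i, (⋃ k, carc (T i) (u i k) (v i k)) ⊆
          ⋃ j, ⋃ (_ : r j = i), carc (T i) (a j) (a j + c j)) ∧
      (∀ i, ∀ k : Fin (q i), ∀ j, r j = i →
        oarc (T i) (v i k)
            (if h : k.1 + 1 < q i then u i ⟨k.1 + 1, h⟩ else u i ⟨0, hq i⟩ + T i)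
          ⊆ carc (T i) (a j) (a j + c j) ∨
        Disjoint
          (oarc (T i) (v i k)
            (if h : k.1 + 1 < q i then u i ⟨k.1 + 1, h⟩ else u i ⟨0, hq i⟩ + T i))
          (carc (T i) (a j) (a j + c j))) := by
  classical
  have hj0 : (0 : ℕ) < n := lt_of_lt_of_le hm hmn
  haveI : Nonempty (Fin m) := ⟨⟨0, hm⟩⟩
  set S := {ℓ : ℝ | ∃ (r' : Fin n → Fin m) (a' c' : Fin n → ℝ),
          (∀ j', 0 ≤ c' j' ∧ c' j' ≤ ℓ) ∧
          ∀ i, (⋃ k, carc (T i) (u i k) (v i k)) ⊆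
            ⋃ j', ⋃ (_ : r' j' = i), carc (T i) (a' j') (a' j' + c' j')} with hSdef
  -- S is nonempty
  have hS0 : S.Nonempty := by
    refine ⟨Finset.univ.sup' Finset.univ_nonempty T,
      fun j => if h : j.1 < m then ⟨j.1, h⟩ else ⟨0, hm⟩, fun _ => 0,
      fun _ => Finset.univ.sup' Finset.univ_nonempty T, fun j =>
        ⟨le_trans (hT ⟨0, hm⟩).le (Finset.le_sup' T (Finset.mem_univ _)), le_refl _⟩, ?_⟩
    intro i x _
    simp only [Set.mem_iUnion]
    refine ⟨⟨i.1, lt_of_lt_of_le i.2 hmn⟩, ?_, ?_⟩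
    · simp [i.2]
    · have h1 : carc (T i) 0 (0 + T i) = univ := carc_univ (T i) 0 (hT i)
      have h2 : carc (T i) 0 (0 + T i) ⊆
          carc (T i) 0 (0 + Finset.univ.sup' Finset.univ_nonempty T) :=
        Set.image_mono (Set.Icc_subset_Icc le_rfl
          (by linarith [Finset.le_sup' T (Finset.mem_univ i)]))
      exact h2 (by rw [h1]; trivial)
  have hSlb : ∀ ℓ ∈ S, (0:ℝ) ≤ ℓ := by
    intro ℓ hℓ
    obtain ⟨r', a', c', hc', -⟩ := hℓ
    exact le_trans (hc' ⟨0, hj0⟩).1 (hc' ⟨0, hj0⟩).2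
  -- minimizers on each compact piece
  have hex : ∀ r : Fin n → Fin m, (gnK T q u v r).Nonempty →
      ∃ p, p ∈ gnK T q u v r ∧ ∀ p' ∈ gnK T q u v r, ‖p.2‖ ≤ ‖p'.2‖ := by
    intro r hne
    obtain ⟨p, hp, hmin⟩ := (gnK_isCompact T q u v r).exists_isMinOn hne
      ((continuous_snd.norm).continuousOn)
    exact ⟨p, hp, fun p' hp' => hmin hp'⟩
  set R : Finset (Fin n → Fin m) :=
    Finset.univ.filter (fun r => (gnK T q u v r).Nonempty) with hRdef
  have hR : R.Nonempty := by
    obtain ⟨ℓ₀, r', a', c', hc', hcov'⟩ := hS0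
    obtain ⟨p, hpK, -⟩ := gnNorm T q u v hT hq huv hsep h0 hTi r' a' c'
      (fun j => (hc' j).1) hcov'
    exact ⟨r', Finset.mem_filter.mpr ⟨Finset.mem_univ _, ⟨p, hpK⟩⟩⟩
  set g : (Fin n → Fin m) → ℝ := fun r =>
    if h : (gnK T q u v r).Nonempty then ‖(Classical.choose (hex r h)).2‖ else 0 with hgdef
  obtain ⟨rs, hrsR, hrsmin⟩ := R.exists_min_image g hR
  have hKrs : (gnK T q u v rs).Nonempty := (Finset.mem_filter.mp hrsR).2
  set pstar := Classical.choose (hex rs hKrs) with hpstardef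
  obtain ⟨hpsK, hpsmin⟩ := Classical.choose_spec (hex rs hKrs)
  have hgrs : g rs = ‖pstar.2‖ := by rw [hgdef]; simp only; rw [dif_pos hKrs]
  -- the attained value is in S
  have hlhatS : ‖pstar.2‖ ∈ S := by
    refine ⟨rs, pstar.1, pstar.2, fun j => ⟨(hpsK.1 j).2.1, ?_⟩,
      gnC_cover T q u v rs pstar hpsK.2⟩
    exact le_trans (le_abs_self _)
      (by simpa [Real.norm_eq_abs] using norm_le_pi_norm pstar.2 j)
  -- it is a lower bound for S
  have hlhat_le : ∀ ℓ ∈ S, ‖pstar.2‖ ≤ ℓ := by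
    intro ℓ hℓ
    obtain ⟨r', a', c', hc', hcov'⟩ := hℓ
    obtain ⟨p', hp'K, hp'le⟩ := gnNorm T q u v hT hq huv hsep h0 hTi r' a' c'
      (fun j => (hc' j).1) hcov'
    have hr'R : r' ∈ R := Finset.mem_filter.mpr ⟨Finset.mem_univ _, ⟨p', hp'K⟩⟩
    have hℓ0 : (0:ℝ) ≤ ℓ := le_trans (hc' ⟨0, hj0⟩).1 (hc' ⟨0, hj0⟩).2
    have hgr' : g r' ≤ ‖p'.2‖ := by
      have hne : (gnK T q u v r').Nonempty := ⟨p', hp'K⟩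
      have := (Classical.choose_spec (hex r' hne)).2 p' hp'K
      rw [hgdef]; simp only; rw [dif_pos hne]; exact this
    have hp'norm : ‖p'.2‖ ≤ ℓ := by
      rw [pi_norm_le_iff_of_nonneg hℓ0]
      intro j
      rw [Real.norm_eq_abs, abs_of_nonneg (hp'K.1 j).2.1]
      exact le_trans (hp'le j) (hc' j).2
    calc ‖pstar.2‖ = g rs := hgrs.symm
      _ ≤ g r' := hrsmin r' hr'R
      _ ≤ ‖p'.2‖ := hgr'
      _ ≤ ℓ := hp'norm
  have hsinf : sInf S = ‖pstar.2‖ :=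
    le_antisymm (csInf_le ⟨0, fun ℓ hℓ => hSlb ℓ hℓ⟩ hlhatS)
      (le_csInf ⟨_, hlhatS⟩ hlhat_le)
  -- Part II : shrink the arcs of the optimal cover
  set Sj : Fin n → Set ℝ := fun j =>
    ⋃ (k' : Fin (q (rs j))), ⋃ (w : Fin 4),
      (Icc (pstar.1 j) (pstar.1 j + pstar.2 j) ∩
       Icc (u (rs j) k' + (((w : ℤ) - 1 : ℤ) : ℝ) * T (rs j))
           (v (rs j) k' + (((w : ℤ) - 1 : ℤ) : ℝ) * T (rs j))) with hSjdef
  have hSjsub : ∀ j, Sj j ⊆ Icc (pstar.1 j) (pstar.1 j + pstar.2 j) := by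
    intro j
    exact Set.iUnion₂_subset fun _ _ => Set.inter_subset_left
  have hSjclosed : ∀ j, IsClosed (Sj j) := fun j =>
    isClosed_iUnion_of_finite fun k' => isClosed_iUnion_of_finite fun w =>
      isClosed_Icc.inter isClosed_Icc
  have hSjbb : ∀ j, BddBelow (Sj j) := fun j => BddBelow.mono (hSjsub j) bddBelow_Icc
  have hSjba : ∀ j, BddAbove (Sj j) := fun j => BddAbove.mono (hSjsub j) bddAbove_Icc
  set A : Fin n → ℝ := fun j =>
    if (Sj j).Nonempty then sInf (Sj j) else u (rs j) ⟨0, hq (rs j)⟩ with hAdef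
  set Cc : Fin n → ℝ := fun j =>
    if (Sj j).Nonempty then sSup (Sj j) - sInf (Sj j) else 0 with hCcdef
  have hmemInf : ∀ j, (Sj j).Nonempty → sInf (Sj j) ∈ Sj j := fun j h =>
    (hSjclosed j).csInf_mem h (hSjbb j)
  have hmemSup : ∀ j, (Sj j).Nonempty → sSup (Sj j) ∈ Sj j := fun j h =>
    (hSjclosed j).csSup_mem h (hSjba j)
  -- endpoints of the new arcs lie (mod T) in perimeter components
  have hEnd : ∀ j, ∀ x ∈ Sj j, ∃ (k' : Fin (q (rs j))) (kz : ℤ),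
      x - (kz : ℝ) * T (rs j) ∈ Icc (u (rs j) k') (v (rs j) k') := by
    intro j x hx
    rw [hSjdef] at hx
    simp only [Set.mem_iUnion] at hx
    obtain ⟨k', w, -, hx2⟩ := hx
    refine ⟨k', (w : ℤ) - 1, ?_⟩
    have h1 := hx2.1
    have h2 := hx2.2
    simp only [Set.mem_Icc]
    constructor <;> [linarith [h1]; linarith [h2]]
  have hEndA : ∀ j, ∃ (k' : Fin (q (rs j))) (kz : ℤ),
      A j - (kz : ℝ) * T (rs j) ∈ Icc (u (rs j) k') (v (rs j) k') := by
    intro j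
    by_cases h : (Sj j).Nonempty
    · have : A j = sInf (Sj j) := by rw [hAdef]; simp only; rw [if_pos h]
      rw [this]
      exact hEnd j _ (hmemInf j h)
    · have : A j = u (rs j) ⟨0, hq (rs j)⟩ := by rw [hAdef]; simp only; rw [if_neg h]
      rw [this]
      refine ⟨⟨0, hq (rs j)⟩, 0, ?_⟩
      simp only [Set.mem_Icc]
      push_cast
      simp only [zero_mul, sub_zero]
      exact ⟨le_refl _, huv (rs j) _⟩
  have hEndB : ∀ j, ∃ (k' : Fin (q (rs j))) (kz : ℤ),
      (A j + Cc j) - (kz : ℝ) * T (rs j) ∈ Icc (u (rs j) k') (v (rs j) k') := by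
    intro j
    by_cases h : (Sj j).Nonempty
    · have : A j + Cc j = sSup (Sj j) := by
        rw [hAdef, hCcdef]; simp only; rw [if_pos h, if_pos h]; ring
      rw [this]
      exact hEnd j _ (hmemSup j h)
    · have : A j + Cc j = u (rs j) ⟨0, hq (rs j)⟩ := by
        rw [hAdef, hCcdef]; simp only; rw [if_neg h, if_neg h]; ring
      rw [this]
      refine ⟨⟨0, hq (rs j)⟩, 0, ?_⟩
      simp only [Set.mem_Icc]
      push_cast
      simp only [zero_mul, sub_zero]
      exact ⟨le_refl _, huv (rs j) _⟩
  refine ⟨rs, A, Cc, ?_, ?_, ?_⟩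
  · -- lengths bounds
    intro j
    constructor
    · by_cases h : (Sj j).Nonempty
      · have : Cc j = sSup (Sj j) - sInf (Sj j) := by rw [hCcdef]; simp only; rw [if_pos h]
        rw [this]
        have := csInf_le_csSup h (hSjbb j) (hSjba j)
        linarith
      · have : Cc j = 0 := by rw [hCcdef]; simp only; rw [if_neg h]
        rw [this]
    · rw [hsinf]
      by_cases h : (Sj j).Nonempty
      · have hCc : Cc j = sSup (Sj j) - sInf (Sj j) := by rw [hCcdef]; simp only; rw [if_pos h]
        have h1 := (hSjsub j) (hmemInf j h)
        have h2 := (hSjsub j) (hmemSup j h)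
        have h3 : Cc j ≤ pstar.2 j := by rw [hCc]; linarith [h1.1, h2.2]
        exact le_trans h3 (le_trans (le_abs_self _)
          (by simpa [Real.norm_eq_abs] using norm_le_pi_norm pstar.2 j))
      · have : Cc j = 0 := by rw [hCcdef]; simp only; rw [if_neg h]
        rw [this]; exact norm_nonneg _
  · -- covering
    intro i x hx
    simp only [Set.mem_iUnion] at hx
    obtain ⟨k', t, ht, hxt⟩ := hx
    obtain ⟨j, hrj, w, hw1, hw2⟩ := hpsK.2 i k' t ht
    subst hrj
    have hsmem : t + (((w : ℤ) - 1 : ℤ) : ℝ) * T (rs j) ∈ Sj j := by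
      rw [hSjdef]
      simp only [Set.mem_iUnion]
      exact ⟨k', w, ⟨hw1, hw2⟩, ⟨by linarith [ht.1], by linarith [ht.2]⟩⟩
    have hne : (Sj j).Nonempty := ⟨_, hsmem⟩
    have hA : A j = sInf (Sj j) := by rw [hAdef]; simp only; rw [if_pos hne]
    have hAC : A j + Cc j = sSup (Sj j) := by
      rw [hAdef, hCcdef]; simp only; rw [if_pos hne, if_pos hne]; ring
    simp only [Set.mem_iUnion]
    refine ⟨j, rfl, t + (((w : ℤ) - 1 : ℤ) : ℝ) * T (rs j),
      ⟨by rw [hA]; exact csInf_le (hSjbb j) hsmem,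
       by rw [hAC]; exact le_csSup (hSjba j) hsmem⟩,
      (coe_int_mul (T (rs j)) ((w : ℤ) - 1) t).trans hxt⟩
  · -- gap dichotomy
    intro i K j hrj
    subst hrj
    have Hα : ∀ k : ℤ, A j + (k : ℝ) * T (rs j) ∉ Ioo (v (rs j) K)
        (if h : K.1 + 1 < q (rs j) then u (rs j) ⟨K.1 + 1, h⟩
         else u (rs j) ⟨0, hq (rs j)⟩ + T (rs j)) := by
      intro k hmem
      obtain ⟨k', kz, hk⟩ := hEndA j
      have heq : (A j - (kz : ℝ) * T (rs j)) + ((kz + k : ℤ) : ℝ) * T (rs j)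
          = A j + (k : ℝ) * T (rs j) := by push_cast; ring
      exact not_in_gap (hq (rs j)) (hT (rs j)) (huv (rs j)) (hsep (rs j)) (h0 (rs j))
        (hTi (rs j)) K k' _ hk (kz + k) (heq ▸ hmem)
    have Hβ : ∀ k : ℤ, (A j + Cc j) + (k : ℝ) * T (rs j) ∉ Ioo (v (rs j) K)
        (if h : K.1 + 1 < q (rs j) then u (rs j) ⟨K.1 + 1, h⟩
         else u (rs j) ⟨0, hq (rs j)⟩ + T (rs j)) := by
      intro k hmem
      obtain ⟨k', kz, hk⟩ := hEndB j
      have heq : ((A j + Cc j) - (kz : ℝ) * T (rs j)) + ((kz + k : ℤ) : ℝ) * T (rs j)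
          = (A j + Cc j) + (k : ℝ) * T (rs j) := by push_cast; ring
      exact not_in_gap (hq (rs j)) (hT (rs j)) (huv (rs j)) (hsep (rs j)) (h0 (rs j))
        (hTi (rs j)) K k' _ hk (kz + k) (heq ▸ hmem)
    exact gap_dichotomy Hα Hβ
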